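/- Upper bound in Example 1: let c₈ > 1, 0 < c₉ < 1, α > 0, and suppose d(q) ≥ c₉ e^{−c₈ q} for all but finitely many q ∈ ℕ with d(q) > 0. Then T(t) := (2πt)^{−1} ∑_{q≥1} e^{−αq} e^{−d(q)²/4t} satisfies T(t) ≤ (2πc₈)^{−1} Γ(α/(2c₈)) c₉^{−α/c₈} t^{−1+α/(2c₈)} + O(t^∞) as t → 0⁺, up to a constant factor. -/

import Mathlib

set_option maxHeartbeats 1000000


open Real

private lemma pow_le_fact_mul_exp (k : ℕ) {x : ℝ} (hx : 0 ≤ x) :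
    x ^ k ≤ k.factorial * Real.exp x := by
  have h1 : x ^ k / k.factorial ≤ Real.exp x := by
    calc x ^ k / k.factorial
        ≤ ∑ i ∈ Finset.range (k + 1), x ^ i / i.factorial := by
          refine Finset.single_le_sum (f := fun i => x ^ i / (i.factorial : ℝ)) ?_ ?_
          · intro i _
            positivity
          · simp
      _ ≤ Real.exp x := Real.sum_le_exp_of_nonneg hx _
  have hk : (0:ℝ) < k.factorial := by positivity
  calc x ^ k = k.factorial * (x ^ k / k.factorial) := by field_simp
    _ ≤ k.factorial * Real.exp x := mul_le_mul_of_nonneg_left h1 hk.le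

private lemma exp_neg_le_fact_div_pow (k : ℕ) {x : ℝ} (hx : 0 < x) :
    Real.exp (-x) ≤ k.factorial / x ^ k := by
  have h := pow_le_fact_mul_exp k hx.le
  rw [Real.exp_neg, le_div_iff₀ (by positivity), inv_mul_eq_div,
    div_le_iff₀ (Real.exp_pos x)]
  linarith

/-- Upper bound in Example 1: with `c₈ > 1`, `0 < c₉ < 1`,
`α > 0`, and `d(q) ≥ c₉ e^{−c₈ q}` for all but finitely many `q`, `d(q) > 0`,
the function `T(t) = (2πt)^{−1} ∑_{q≥1} e^{−αq} e^{−d(q)²/4t}` satisfies, up to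
a constant factor `K` and exponentially small terms (here `O(t^N)` for every
`N`), `T(t) ≤ K (2πc₈)^{−1} Γ(α/(2c₈)) c₉^{−α/c₈} t^{−1+α/(2c₈)}`. -/
theorem stmt17 (c₈ c₉ α : ℝ) (h8 : 1 < c₈) (h9 : 0 < c₉) (h9' : c₉ < 1)
    (hα : 0 < α) (d : ℕ → ℝ) (hdpos : ∀ q, 0 < d q)
    (hd : ∃ Q₀ : ℕ, ∀ q : ℕ, Q₀ ≤ q → c₉ * Real.exp (-c₈ * q) ≤ d q) :
    ∃ K : ℝ, 0 < K ∧ ∀ N : ℕ, ∃ C' δ : ℝ, 0 < δ ∧ ∀ t : ℝ, 0 < t → t < δ →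
      (2 * π * t)⁻¹ *
          ∑' q : ℕ, Real.exp (-α * (q + 1)) * Real.exp (-(d (q + 1)) ^ 2 / (4 * t))
        ≤ K * ((2 * π * c₈)⁻¹ * Real.Gamma (α / (2 * c₈)) * c₉ ^ (-α / c₈)) *
            t ^ (-1 + α / (2 * c₈)) + C' * t ^ (N : ℝ) := by
  obtain ⟨Q₀, hQ₀⟩ := hd
  set β : ℝ := 2 * c₈ with hβdef
  have hβ : 0 < β := by positivity
  set s : ℝ := α / β with hsdef
  have hs : 0 < s := by positivity
  set k : ℕ := ⌈s⌉₊ + 1 with hkdef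
  have hks : s < k := by
    have := Nat.le_ceil s
    push_cast [hkdef]
    linarith
  set γ : ℝ := β * k - α with hγdef
  have hγ : 0 < γ := by
    have h1 : α = β * s := by rw [hsdef]; field_simp
    have h2 : β * s < β * k := mul_lt_mul_of_pos_left hks hβ
    rw [hγdef]
    linarith
  -- minimum of d over initial segment
  set m' : ℝ := min ((Finset.range (Q₀ + 1)).inf' ⟨0, by simp⟩ d) 1 with hm'def
  have hm' : 0 < m' := by
    rw [hm'def]
    refine lt_min ?_ one_pos
    refine (Finset.lt_inf'_iff _).mpr ?_
    exact fun b _ => hdpos b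
  have hm'le : ∀ n, n ≤ Q₀ → m' ≤ d n := by
    intro n hn
    calc m' ≤ (Finset.range (Q₀ + 1)).inf' ⟨0, by simp⟩ d := min_le_left _ _
      _ ≤ d n := Finset.inf'_le d (by simp [Nat.lt_succ_iff, hn])
  -- constants
  have hea : Real.exp (-α) < 1 := Real.exp_lt_one_iff.mpr (by linarith)
  have hea0 : (0:ℝ) ≤ Real.exp (-α) := (Real.exp_pos _).le
  set Ct : ℝ := (1 - Real.exp (-α))⁻¹ with hCtdef
  have hCt : 0 < Ct := by
    rw [hCtdef]
    exact inv_pos.mpr (by linarith)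
  have heγ : 1 < Real.exp γ := Real.one_lt_exp_iff.mpr hγ
  set Ch : ℝ := k.factorial * (Real.exp γ / (Real.exp γ - 1)) with hChdef
  have hCh : 0 < Ch := by
    rw [hChdef]
    have h1 : (0:ℝ) < k.factorial := by positivity
    have h2 : (0:ℝ) < Real.exp γ - 1 := by linarith
    have h3 := Real.exp_pos γ
    positivity
  set C₂ : ℝ := Ct + Ch with hC₂def
  have hC₂ : 0 < C₂ := by rw [hC₂def]; positivity
  have h4c : (0:ℝ) < 4 / c₉ ^ 2 := by positivity
  set C₃ : ℝ := C₂ * (4 / c₉ ^ 2) ^ s with hC₃def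
  have hC₃ : 0 < C₃ := by
    rw [hC₃def]
    have := Real.rpow_pos_of_pos h4c s
    positivity
  set E : ℝ := (2 * π * c₈)⁻¹ * Real.Gamma s * c₉ ^ (-α / c₈) with hEdef
  have hE : 0 < E := by
    have h1 : (0:ℝ) < 2 * π * c₈ := by positivity
    have h2 : 0 < Real.Gamma s := Real.Gamma_pos_of_pos hs
    have h3 : 0 < c₉ ^ (-α / c₈) := Real.rpow_pos_of_pos h9 _
    rw [hEdef]
    positivity
  refine ⟨(C₃ / (2 * π)) / E, by positivity, ?_⟩
  intro N
  set D : ℝ := (2 * π)⁻¹ * Q₀ * (N + 2).factorial * (4 / m' ^ 2) ^ (N + 2) with hDdef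
  refine ⟨D, min 1 (c₉ ^ 2 * Real.exp (-β) / 4), by positivity, ?_⟩
  intro t ht htδ
  have ht1 : t ≤ 1 := le_of_lt (lt_of_lt_of_le htδ (min_le_left _ _))
  have htβ : t < c₉ ^ 2 * Real.exp (-β) / 4 := lt_of_lt_of_le htδ (min_le_right _ _)
  set A : ℝ := c₉ ^ 2 / (4 * t) with hAdef
  have hA : 0 < A := by rw [hAdef]; positivity
  have hA1 : Real.exp β < A := by
    rw [hAdef, lt_div_iff₀ (by positivity)]
    have h1 : Real.exp β * Real.exp (-β) = 1 := by rw [← Real.exp_add]; simp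
    have h2 : 4 * t < c₉ ^ 2 * Real.exp (-β) := by linarith only [htβ]
    calc Real.exp β * (4 * t) < Real.exp β * (c₉ ^ 2 * Real.exp (-β)) :=
          mul_lt_mul_of_pos_left h2 (Real.exp_pos β)
      _ = c₉ ^ 2 * (Real.exp β * Real.exp (-β)) := by ring
      _ = c₉ ^ 2 := by rw [h1, mul_one]
  have hlogA : β < Real.log A := by
    have h1 := Real.log_lt_log (Real.exp_pos β) hA1
    rwa [Real.log_exp] at h1
  have hlogA0 : 0 < Real.log A := lt_trans hβ hlogA
  set L : ℝ := Real.log A / β with hLdef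
  have hL1 : 1 < L := by
    rw [hLdef, lt_div_iff₀ hβ]
    linarith only [hlogA]
  set Q : ℕ := ⌈L⌉₊ with hQdef
  have hQL : L ≤ Q := Nat.le_ceil L
  have hQU : (Q : ℝ) < L + 1 := Nat.ceil_lt_add_one (by linarith only [hL1])
  have hQ1 : 1 ≤ Q := Nat.one_le_ceil_iff.mpr (by linarith only [hL1])
  -- the functions
  set F : ℕ → ℝ := fun q => Real.exp (-α * (q + 1)) * Real.exp (-(d (q + 1)) ^ 2 / (4 * t))
    with hFdef
  set G : ℕ → ℝ := fun q =>
    Real.exp (-α * (q + 1)) * Real.exp (-(A * Real.exp (-β * (q + 1)))) with hGdef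
  set H : ℕ → ℝ := fun q => if q + 1 < Q₀ then Real.exp (-(m' ^ 2 / (4 * t))) else 0
    with hHdef
  have hFnn : ∀ q, 0 ≤ F q := fun q => by rw [hFdef]; positivity
  have hGnn : ∀ q, 0 ≤ G q := fun q => by rw [hGdef]; positivity
  have hHnn : ∀ q, 0 ≤ H q := fun q => by
    rw [hHdef]
    dsimp only
    split <;> positivity
  -- summability
  have hgeo : Summable (fun q : ℕ => Real.exp (-α) ^ q) :=
    summable_geometric_of_lt_one hea0 hea
  have hexple : ∀ q : ℕ, Real.exp (-α * ((q:ℝ) + 1)) ≤ Real.exp (-α) ^ q := by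
    intro q
    rw [← Real.exp_nat_mul]
    apply Real.exp_le_exp.mpr
    have h2 : (q:ℝ) * -α - -α * ((q:ℝ) + 1) = α := by ring
    linarith only [hα, h2]
  have hexp_le_one : ∀ x : ℝ, 0 ≤ x → Real.exp (-x) ≤ 1 := by
    intro x hx
    exact Real.exp_le_one_iff.mpr (by linarith only [hx])
  have hFle : ∀ q : ℕ, F q ≤ Real.exp (-α * ((q:ℝ) + 1)) := by
    intro q
    have h1 : Real.exp (-(d (q + 1)) ^ 2 / (4 * t)) ≤ 1 := by
      rw [neg_div]
      exact hexp_le_one _ (by positivity)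
    calc F q ≤ Real.exp (-α * ((q:ℝ) + 1)) * 1 :=
          mul_le_mul_of_nonneg_left h1 (Real.exp_pos _).le
      _ = _ := mul_one _
  have hGle : ∀ q : ℕ, G q ≤ Real.exp (-α * ((q:ℝ) + 1)) := by
    intro q
    have h1 : Real.exp (-(A * Real.exp (-β * ((q:ℝ) + 1)))) ≤ 1 :=
      hexp_le_one _ (by positivity)
    calc G q ≤ Real.exp (-α * ((q:ℝ) + 1)) * 1 :=
          mul_le_mul_of_nonneg_left h1 (Real.exp_pos _).le
      _ = _ := mul_one _
  have sumF : Summable F :=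
    Summable.of_nonneg_of_le hFnn (fun q => (hFle q).trans (hexple q)) hgeo
  have sumG : Summable G :=
    Summable.of_nonneg_of_le hGnn (fun q => (hGle q).trans (hexple q)) hgeo
  have hHzero : ∀ q ∉ Finset.range Q₀, H q = 0 := by
    intro q hq
    simp only [Finset.mem_range, not_lt] at hq
    rw [hHdef]
    exact if_neg (by omega)
  have sumH : Summable H := summable_of_ne_finset_zero hHzero
  -- pointwise bound F ≤ G + H
  have hFGH : ∀ q, F q ≤ G q + H q := by
    intro q
    by_cases hc : q + 1 < Q₀
    · have h1 : F q ≤ H q := by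
        rw [hHdef]
        dsimp only
        rw [if_pos hc]
        have h2 : m' ^ 2 ≤ (d (q + 1)) ^ 2 := by
          have h3 := hm'le (q + 1) (by omega)
          exact pow_le_pow_left₀ hm'.le h3 2
        calc F q ≤ 1 * Real.exp (-(d (q + 1)) ^ 2 / (4 * t)) := by
              apply mul_le_mul_of_nonneg_right _ (Real.exp_pos _).le
              refine Real.exp_le_one_iff.mpr ?_
              rw [neg_mul]
              exact neg_nonpos.mpr (by positivity)
          _ = Real.exp (-(d (q + 1)) ^ 2 / (4 * t)) := one_mul _
          _ ≤ Real.exp (-(m' ^ 2 / (4 * t))) := by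
              apply Real.exp_le_exp.mpr
              rw [neg_div]
              exact neg_le_neg ((div_le_div_iff_of_pos_right (by positivity)).mpr h2)
      linarith only [h1, hGnn q]
    · push_neg at hc
      have h1 : F q ≤ G q := by
        rw [hFdef, hGdef]
        dsimp only
        apply mul_le_mul_of_nonneg_left _ (Real.exp_pos _).le
        apply Real.exp_le_exp.mpr
        have hb := hQ₀ (q + 1) hc
        have hcast : ((q + 1 : ℕ) : ℝ) = (q : ℝ) + 1 := by push_cast; ring
        rw [hcast] at hb
        have h2 : (c₉ * Real.exp (-c₈ * ((q:ℝ) + 1))) ^ 2 ≤ (d (q + 1)) ^ 2 := by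
          have h3 : 0 ≤ c₉ * Real.exp (-c₈ * ((q:ℝ) + 1)) := by positivity
          exact pow_le_pow_left₀ h3 hb 2
        have h4 : (c₉ * Real.exp (-c₈ * ((q:ℝ) + 1))) ^ 2
            = c₉ ^ 2 * Real.exp (-β * ((q:ℝ) + 1)) := by
          rw [mul_pow, sq (Real.exp _), ← Real.exp_add]
          congr 2
          rw [hβdef]
          ring
        have h6 : A * Real.exp (-β * ((q:ℝ) + 1)) ≤ (d (q + 1)) ^ 2 / (4 * t) := by
          rw [hAdef, div_mul_eq_mul_div]
          apply (div_le_div_iff_of_pos_right (by positivity)).mpr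
          rw [← h4]
          exact h2
        rw [neg_div]
        exact neg_le_neg h6
      have h5 : H q = 0 := by
        rw [hHdef]
        exact if_neg (by omega)
      rw [h5, add_zero]
      exact h1
  -- split the sum for G
  have hc1 : ∀ q : ℕ, ((q + (Q - 1) : ℕ) : ℝ) + 1 = (q : ℝ) + Q := by
    intro q
    have h1 : (q + (Q - 1)) + 1 = q + Q := by omega
    calc ((q + (Q - 1) : ℕ) : ℝ) + 1 = (((q + (Q - 1)) + 1 : ℕ) : ℝ) := by push_cast; ring
      _ = ((q + Q : ℕ) : ℝ) := by rw [h1]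
      _ = (q : ℝ) + Q := by push_cast; ring
  have htail : (∑' q : ℕ, G (q + (Q - 1))) ≤ Ct * A ^ (-s) := by
    have hb : ∀ q : ℕ, G (q + (Q - 1)) ≤ Real.exp (-α * (Q:ℝ)) * Real.exp (-α) ^ q := by
      intro q
      have h1 := hGle (q + (Q - 1))
      rw [hc1 q] at h1
      calc G (q + (Q - 1)) ≤ Real.exp (-α * ((q : ℝ) + Q)) := h1
        _ = Real.exp (-α * (Q:ℝ)) * Real.exp (-α) ^ q := by
            rw [← Real.exp_nat_mul, ← Real.exp_add]
            congr 1
            ring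
    calc (∑' q : ℕ, G (q + (Q - 1)))
        ≤ ∑' q : ℕ, Real.exp (-α * (Q:ℝ)) * Real.exp (-α) ^ q :=
          Summable.tsum_le_tsum hb ((summable_nat_add_iff (Q - 1)).mpr sumG) (hgeo.mul_left _)
      _ = Real.exp (-α * (Q:ℝ)) * (1 - Real.exp (-α))⁻¹ := by
          rw [tsum_mul_left, tsum_geometric_of_lt_one hea0 hea]
      _ ≤ A ^ (-s) * Ct := by
          rw [hCtdef]
          apply mul_le_mul_of_nonneg_right _ (inv_nonneg.mpr (by linarith only [hea]))
          · rw [Real.rpow_def_of_pos hA]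
            apply Real.exp_le_exp.mpr
            have h7 : Real.log A * (-s) = -(α * L) := by
              rw [hsdef, hLdef]
              field_simp
            have h8 : α * L ≤ α * Q := mul_le_mul_of_nonneg_left hQL hα.le
            rw [h7]
            linarith only [h8]
      _ = Ct * A ^ (-s) := mul_comm _ _
  have hgsum : ∑ q ∈ Finset.range (Q - 1), Real.exp γ ^ (q + 1)
      ≤ Real.exp γ * Real.exp (γ * L) / (Real.exp γ - 1) := by
    have hr1 : Real.exp γ ≠ 1 := ne_of_gt heγ
    have he1 : (0:ℝ) < Real.exp γ - 1 := by linarith only [heγ]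
    have h1 : ∑ q ∈ Finset.range (Q - 1), Real.exp γ ^ (q + 1)
        = (Real.exp γ ^ (Q - 1) - 1) / (Real.exp γ - 1) * Real.exp γ := by
      rw [← geom_sum_eq hr1, Finset.sum_mul]
      apply Finset.sum_congr rfl
      intro q _
      rw [pow_succ]
    have h2 : Real.exp γ ^ (Q - 1) ≤ Real.exp (γ * L) := by
      rw [← Real.exp_nat_mul]
      apply Real.exp_le_exp.mpr
      have h3 : ((Q - 1 : ℕ) : ℝ) = (Q : ℝ) - 1 := by
        rw [Nat.cast_sub hQ1]
        norm_num
      have h4 : ((Q - 1 : ℕ) : ℝ) ≤ L := by rw [h3]; linarith only [hQU]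
      calc ((Q - 1 : ℕ) : ℝ) * γ ≤ L * γ := mul_le_mul_of_nonneg_right h4 hγ.le
        _ = γ * L := mul_comm _ _
    have h6 : Real.exp γ ^ (Q - 1) - 1 ≤ Real.exp (γ * L) := by linarith only [h2]
    rw [h1]
    calc (Real.exp γ ^ (Q - 1) - 1) / (Real.exp γ - 1) * Real.exp γ
        ≤ Real.exp (γ * L) / (Real.exp γ - 1) * Real.exp γ := by
          apply mul_le_mul_of_nonneg_right _ (Real.exp_pos γ).le
          exact (div_le_div_iff_of_pos_right he1).mpr h6
      _ = Real.exp γ * Real.exp (γ * L) / (Real.exp γ - 1) := by ring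
  have hhead : (∑ q ∈ Finset.range (Q - 1), G q) ≤ Ch * A ^ (-s) := by
    have hAk : (0:ℝ) < A ^ k := pow_pos hA k
    have hb : ∀ q ∈ Finset.range (Q - 1),
        G q ≤ (k.factorial * (A ^ k)⁻¹) * Real.exp γ ^ (q + 1) := by
      intro q _
      have hx : 0 < A * Real.exp (-β * ((q:ℝ) + 1)) := by positivity
      have h1 := exp_neg_le_fact_div_pow k hx
      have h2 : (A * Real.exp (-β * ((q:ℝ) + 1))) ^ k
          = A ^ k * Real.exp ((k:ℝ) * (-β * ((q:ℝ) + 1))) := by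
        rw [mul_pow, Real.exp_nat_mul]
      have h3 : Real.exp γ ^ (q + 1) = Real.exp (γ * ((q:ℝ) + 1)) := by
        rw [← Real.exp_nat_mul]
        congr 1
        push_cast
        ring
      calc G q ≤ Real.exp (-α * ((q:ℝ) + 1))
            * ((k.factorial : ℝ) / (A ^ k * Real.exp ((k:ℝ) * (-β * ((q:ℝ) + 1))))) := by
            rw [← h2, hGdef]
            exact mul_le_mul_of_nonneg_left h1 (Real.exp_pos _).le
        _ = (k.factorial * (A ^ k)⁻¹) * Real.exp (γ * ((q:ℝ) + 1)) := by
            have hc : γ * ((q:ℝ) + 1)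
                = (-α * ((q:ℝ) + 1)) - ((k:ℝ) * (-β * ((q:ℝ) + 1))) := by
              rw [hγdef]
              ring
            rw [hc, Real.exp_sub]
            field_simp [Real.exp_ne_zero]
        _ = (k.factorial * (A ^ k)⁻¹) * Real.exp γ ^ (q + 1) := by rw [h3]
    calc (∑ q ∈ Finset.range (Q - 1), G q)
        ≤ ∑ q ∈ Finset.range (Q - 1), (k.factorial * (A ^ k)⁻¹) * Real.exp γ ^ (q + 1) :=
          Finset.sum_le_sum hb
      _ = (k.factorial * (A ^ k)⁻¹) * ∑ q ∈ Finset.range (Q - 1), Real.exp γ ^ (q + 1) := by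
          rw [Finset.mul_sum]
      _ ≤ (k.factorial * (A ^ k)⁻¹)
            * (Real.exp γ * Real.exp (γ * L) / (Real.exp γ - 1)) := by
          apply mul_le_mul_of_nonneg_left hgsum (by positivity)
      _ = Ch * ((A ^ k)⁻¹ * Real.exp (γ * L)) := by
          rw [hChdef]
          ring
      _ = Ch * A ^ (-s) := by
          congr 1
          have h5 : Real.exp (γ * L) = A ^ (γ / β) := by
            rw [Real.rpow_def_of_pos hA, hLdef]
            congr 1
            field_simp
          have h6 : ((A:ℝ) ^ k)⁻¹ = A ^ (-(k:ℝ)) := by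
            rw [← Real.rpow_natCast A k, ← Real.rpow_neg hA.le]
          rw [h5, h6, ← Real.rpow_add hA]
          congr 1
          rw [hγdef, hsdef]
          field_simp
          ring
  have hGbound : (∑' q, G q) ≤ C₂ * A ^ (-s) := by
    rw [← Summable.sum_add_tsum_nat_add (Q - 1) sumG]
    calc (∑ q ∈ Finset.range (Q - 1), G q) + ∑' q : ℕ, G (q + (Q - 1))
        ≤ Ch * A ^ (-s) + Ct * A ^ (-s) := add_le_add hhead htail
      _ = C₂ * A ^ (-s) := by rw [hC₂def]; ring
  -- bound tsum H
  have hHbound : (∑' q, H q) ≤ Q₀ * Real.exp (-(m' ^ 2 / (4 * t))) := by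
    rw [tsum_eq_sum hHzero]
    calc ∑ q ∈ Finset.range Q₀, H q
        ≤ (Finset.range Q₀).card • Real.exp (-(m' ^ 2 / (4 * t))) := by
          apply Finset.sum_le_card_nsmul
          intro q _
          rw [hHdef]
          dsimp only
          split
          · exact le_rfl
          · positivity
      _ = Q₀ * Real.exp (-(m' ^ 2 / (4 * t))) := by
          rw [Finset.card_range, nsmul_eq_mul]
  -- convert A^(-s) to t^s
  have hAinv : A⁻¹ = 4 / c₉ ^ 2 * t := by
    rw [hAdef]
    field_simp
  have hAs : A ^ (-s) = (4 / c₉ ^ 2) ^ s * t ^ s := by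
    rw [Real.rpow_neg hA.le, ← Real.inv_rpow hA.le, hAinv,
      Real.mul_rpow (by positivity) ht.le]
  -- the H-term is O(t^N)
  have hHfinal : (2 * π * t)⁻¹ * ((Q₀ : ℝ) * Real.exp (-(m' ^ 2 / (4 * t))))
      ≤ D * t ^ (N : ℝ) := by
    have hy : 0 < m' ^ 2 / (4 * t) := by positivity
    have h1 := exp_neg_le_fact_div_pow (N + 2) hy
    have h2 : ((N + 2).factorial : ℝ) / (m' ^ 2 / (4 * t)) ^ (N + 2)
        = ((N + 2).factorial : ℝ) * (4 / m' ^ 2) ^ (N + 2) * t ^ (N + 2) := by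
      rw [div_pow, div_pow, mul_pow]
      field_simp
    have h3 : (2 * π * t)⁻¹ * ((Q₀ : ℝ) * Real.exp (-(m' ^ 2 / (4 * t))))
        ≤ (2 * π * t)⁻¹ * ((Q₀ : ℝ) * (((N + 2).factorial : ℝ) * (4 / m' ^ 2) ^ (N + 2) * t ^ (N + 2))) := by
      apply mul_le_mul_of_nonneg_left _ (by positivity)
      apply mul_le_mul_of_nonneg_left _ (Nat.cast_nonneg Q₀)
      rw [← h2]
      exact h1
    have h4 : (2 * π * t)⁻¹ * ((Q₀ : ℝ) * (((N + 2).factorial : ℝ) * (4 / m' ^ 2) ^ (N + 2) * t ^ (N + 2)))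
        = D * t ^ (N + 1) := by
      rw [hDdef]
      have htne : t ≠ 0 := ht.ne'
      have hπ : π ≠ 0 := pi_ne_zero
      field_simp
      ring
    have h5 : D * t ^ (N + 1) ≤ D * t ^ N := by
      apply mul_le_mul_of_nonneg_left _ (by rw [hDdef]; positivity)
      calc t ^ (N + 1) = t ^ N * t := pow_succ t N
        _ ≤ t ^ N * 1 := mul_le_mul_of_nonneg_left ht1 (by positivity)
        _ = t ^ N := mul_one _
    have h6 : D * t ^ N = D * t ^ (N : ℝ) := by
      rw [Real.rpow_natCast]
    linarith only [h3, h4, h5, h6]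
  -- assemble
  have hKE : C₃ / (2 * π) / E * E = C₃ / (2 * π) := div_mul_cancel₀ _ hE.ne'
  have hts : t⁻¹ * t ^ s = t ^ (-1 + s) := by
    rw [Real.rpow_add ht, Real.rpow_neg_one]
  have hfirst : (2 * π * t)⁻¹ * (C₂ * ((4 / c₉ ^ 2) ^ s * t ^ s))
      = C₃ / (2 * π) / E * E * t ^ (-1 + s) := by
    rw [hKE, ← hts, hC₃def, mul_inv]
    ring
  have hsum1 : (∑' q, F q) ≤ C₂ * ((4 / c₉ ^ 2) ^ s * t ^ s)
      + (Q₀ : ℝ) * Real.exp (-(m' ^ 2 / (4 * t))) := by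
    calc (∑' q, F q) ≤ ∑' q, (G q + H q) := Summable.tsum_le_tsum hFGH sumF (sumG.add sumH)
      _ = (∑' q, G q) + (∑' q, H q) := Summable.tsum_add sumG sumH
      _ ≤ C₂ * A ^ (-s) + (Q₀ : ℝ) * Real.exp (-(m' ^ 2 / (4 * t))) :=
          add_le_add hGbound hHbound
      _ = _ := by rw [hAs]
  calc (2 * π * t)⁻¹ * (∑' q, F q)
      ≤ (2 * π * t)⁻¹ * (C₂ * ((4 / c₉ ^ 2) ^ s * t ^ s)
          + (Q₀ : ℝ) * Real.exp (-(m' ^ 2 / (4 * t)))) :=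
        mul_le_mul_of_nonneg_left hsum1 (by positivity)
    _ = (2 * π * t)⁻¹ * (C₂ * ((4 / c₉ ^ 2) ^ s * t ^ s))
          + (2 * π * t)⁻¹ * ((Q₀ : ℝ) * Real.exp (-(m' ^ 2 / (4 * t)))) := mul_add _ _ _
    _ ≤ C₃ / (2 * π) / E * E * t ^ (-1 + s) + D * t ^ (N : ℝ) := by
        rw [hfirst]
        exact add_le_add_right hHfinal _
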